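/- Define sequences α₁ = 8d/ln d, β₁ = d, keep_i = (1 − 1/(2 ln d · α_i))^{2β_i}, color_i = (1 − 1/(2 ln d · α_i))^{keep_i·α_i/2}, α_{i+1} = keep_i·α_i, β_{i+1} = color_i·keep_i·β_i. Then for all d larger than an absolute constant: (a) color_i ≤ 1 − 1/(6 ln d) for every i; (b) setting r_i = β_i/α_i, one has r_{i+1} ≤ (1 − 1/(6 ln d))^i · r₁ for all i ≥ 1; (c) there exists an absolute constant δ > 0 (independent of d) such that α_i ≥ d^δ for all i. -/

import Mathlib

set_option maxHeartbeats 1000000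


/-- For the sequences α₁ = 8d/ln d, β₁ = d,
keepᵢ = (1 − 1/(2 ln d·αᵢ))^{2βᵢ}, colorᵢ = (1 − 1/(2 ln d·αᵢ))^{keepᵢ·αᵢ/2},
α_{i+1} = keepᵢ·αᵢ, β_{i+1} = colorᵢ·keepᵢ·βᵢ, for all d larger than an absolute
constant: (a) colorᵢ ≤ 1 − 1/(6 ln d); (b) with rᵢ = βᵢ/αᵢ,
r_{i+1} ≤ (1 − 1/(6 ln d))ⁱ·r₁; (c) there is an absolute constant δ > 0 with
αᵢ ≥ d^δ for all i. -/
theorem stmt_19 : ∃ δ : ℝ, 0 < δ ∧ ∃ d₀ : ℝ, ∀ d : ℝ, d₀ < d →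
    ∀ α β keep color : ℕ → ℝ,
    (∀ i, 1 ≤ i → 0 < α i) → (∀ i, 1 ≤ i → 0 < β i) →
    α 1 = 8 * d / Real.log d → β 1 = d →
    (∀ i, 1 ≤ i → keep i = (1 - 1 / (2 * Real.log d * α i)) ^ (2 * β i)) →
    (∀ i, 1 ≤ i → color i = (1 - 1 / (2 * Real.log d * α i)) ^ (keep i * α i / 2)) →
    (∀ i, 1 ≤ i → α (i + 1) = keep i * α i) →
    (∀ i, 1 ≤ i → β (i + 1) = color i * keep i * β i) →
    (∀ i, 1 ≤ i → color i ≤ 1 - 1 / (6 * Real.log d)) ∧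
    (∀ i, 1 ≤ i → β (i + 1) / α (i + 1) ≤
        (1 - 1 / (6 * Real.log d)) ^ i * (β 1 / α 1)) ∧
    (∀ i, 1 ≤ i → d ^ δ ≤ α i) := by
  refine ⟨1/10, by norm_num, Real.exp 1000, ?_⟩
  intro d hd α β keep color hαpos hβpos hα1 hβ1 hkeep hcolor hαs hβs
  set L := Real.log d with hLdef
  have hd0 : (0:ℝ) < d := (Real.exp_pos 1000).trans hd
  have hL : (1000:ℝ) ≤ L := by
    have h := Real.log_lt_log (Real.exp_pos 1000) hd
    rw [Real.log_exp] at h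
    linarith
  have hL0 : (0:ℝ) < L := by linarith
  have hdexp : d = Real.exp L := (Real.exp_log hd0).symm
  have hα1pos : 0 < α 1 := hαpos 1 le_rfl
  have hr1 : β 1 / α 1 = L / 8 := by
    rw [hβ1, hα1]
    field_simp
  have hε1 : 1/(6*L) ≤ 1/6000 := by
    rw [div_le_div_iff₀ (by positivity) (by norm_num)]
    linarith
  have hε0 : 0 < 1/(6*L) := by positivity
  -- auxiliary: exp(-(11/10)x) ≤ 1 - x  for 0 ≤ x ≤ 1/11
  have aux : ∀ x : ℝ, 0 ≤ x → x ≤ 1/11 → Real.exp (-(11/10*x)) ≤ 1 - x := by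
    intro x h0 h1
    have h := Real.add_one_le_exp (11/10*x)
    rw [Real.exp_neg, ← one_div, div_le_iff₀ (Real.exp_pos _)]
    nlinarith [mul_le_mul_of_nonneg_left h (by linarith : (0:ℝ) ≤ 1 - x),
      mul_nonneg h0 (by linarith : (0:ℝ) ≤ 1 - 11*x)]
  -- per-index derivations from the invariant
  have derived : ∀ n : ℕ,
      β (n+1) / α (n+1) ≤ (1 - 1/(6*L))^n * (β 1 / α 1) →
      α 1 * Real.exp (-(33/40)*L*(1 - (1 - 1/(6*L))^n)) ≤ α (n+1) →
      (Real.exp (-(11/80)*(1 - 1/(6*L))^n) ≤ keep (n+1) ∧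
       color (n+1) ≤ 1 - 1/(6*L) ∧
       d ^ ((1:ℝ)/10) ≤ α (n+1)) := by
    intro n h1 h2
    have hi : 1 ≤ n + 1 := Nat.le_add_left 1 n
    have hαp : 0 < α (n+1) := hαpos _ hi
    have hβp : 0 < β (n+1) := hβpos _ hi
    set q := (1 - 1/(6*L))^n with hq
    have hq0 : 0 ≤ q := pow_nonneg (by linarith) n
    have hq1 : q ≤ 1 := pow_le_one₀ (by linarith) (by linarith)
    -- the d^(1/10) lower bound on α (n+1)
    have hαd : d ^ ((1:ℝ)/10) ≤ α (n+1) := by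
      have hmono : Real.exp (-(33/40)*L) ≤ Real.exp (-(33/40)*L*(1 - q)) := by
        apply Real.exp_le_exp.mpr
        nlinarith
      have hstep : α 1 * Real.exp (-(33/40)*L) ≤ α (n+1) := by
        calc α 1 * Real.exp (-(33/40)*L)
            ≤ α 1 * Real.exp (-(33/40)*L*(1 - q)) := by
              exact mul_le_mul_of_nonneg_left hmono hα1pos.le
          _ ≤ α (n+1) := h2
      have hval : α 1 * Real.exp (-(33/40)*L) = 8 * Real.exp (7*L/40) / L := by
        rw [hα1, hdexp, show (7:ℝ)*L/40 = L + -(33/40)*L by ring, Real.exp_add]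
        ring
      rw [Real.rpow_def_of_pos hd0, ← hLdef]
      refine le_trans ?_ hstep
      rw [hval, le_div_iff₀ hL0]
      have e1 : Real.exp (7*L/40) = Real.exp (3*L/80) * Real.exp (3*L/80) * Real.exp (L * (1/10)) := by
        rw [← Real.exp_add, ← Real.exp_add]
        ring_nf
      have e2 := Real.add_one_le_exp (3*L/80)
      have e3 := Real.exp_pos (L * (1/10))
      have e4 : Real.exp (L/10) ≤ Real.exp (L * (1/10)) := by
        apply Real.exp_le_exp.mpr; ring_nf; exact le_rfl
      rw [e1]
      have h8 : L ≤ 8 * (Real.exp (3*L/80) * Real.exp (3*L/80)) := by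
        nlinarith [mul_le_mul e2 e2 (by linarith) (Real.exp_pos (3*L/80)).le]
      nlinarith [mul_le_mul_of_nonneg_right h8 e3.le]
    have hα1le : 1 ≤ α (n+1) := by
      refine le_trans ?_ hαd
      rw [Real.rpow_def_of_pos hd0, ← hLdef]
      have : (0:ℝ) ≤ L * (1/10) := by positivity
      calc (1:ℝ) = Real.exp 0 := Real.exp_zero.symm
        _ ≤ _ := Real.exp_le_exp.mpr this
    set x := 1 / (2 * L * α (n+1)) with hx
    have hx0 : 0 < x := by positivity
    have hx11 : x ≤ 1/11 := by
      rw [hx, div_le_div_iff₀ (by positivity) (by norm_num)]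
      nlinarith
    have hb0 : 0 < 1 - x := by linarith
    have hb1 : 1 - x ≤ 1 := by linarith
    have hkeq := hkeep (n+1) hi
    have hceq := hcolor (n+1) hi
    rw [← hx] at hkeq hceq
    -- keep lower bound
    have hkexp : Real.exp (-(11/10*x)) ^ (2 * β (n+1)) = Real.exp (-(11/10*x) * (2 * β (n+1))) := by
      rw [Real.exp_mul]
    have hklb : Real.exp (-(11/80)*q) ≤ keep (n+1) := by
      have h3 : Real.exp (-(11/10*x)) ^ (2 * β (n+1)) ≤ (1 - x) ^ (2 * β (n+1)) :=
        Real.rpow_le_rpow (Real.exp_nonneg _) (aux x hx0.le hx11) (by positivity)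
      rw [hkexp] at h3
      rw [hkeq]
      refine le_trans ?_ h3
      apply Real.exp_le_exp.mpr
      have hba : β (n+1) / α (n+1) ≤ q * (L/8) := by
        rw [hr1] at h1; linarith [h1]
      have hba' : β (n+1) ≤ q * (L/8) * α (n+1) := by
        rw [div_le_iff₀ hαp] at hba; exact hba
      have hfrac : -(11/10*x) * (2 * β (n+1)) = -(11/10 * (β (n+1) / α (n+1)) / L) := by
        rw [hx]; field_simp
      rw [hfrac]
      have hgoal : 11/10 * (β (n+1) / α (n+1)) / L ≤ 11/80 * q := by
        rw [div_le_iff₀ hL0]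
        nlinarith [hba]
      linarith
    have hkpos : 0 < keep (n+1) := by
      rw [hkeq]; exact Real.rpow_pos_of_pos hb0 _
    have hk34 : 3/4 ≤ keep (n+1) := by
      refine le_trans ?_ hklb
      have h4 := Real.add_one_le_exp (-(11/80)*q)
      nlinarith
    -- color upper bound
    have hcle : color (n+1) ≤ 1 - 1/(6*L) := by
      have h5 : 1 - x ≤ Real.exp (-x) := by
        have := Real.add_one_le_exp (-x); linarith
      have hy0 : 0 ≤ keep (n+1) * α (n+1) / 2 := by positivity
      have h6 : (1 - x) ^ (keep (n+1) * α (n+1) / 2) ≤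
          Real.exp (-x) ^ (keep (n+1) * α (n+1) / 2) :=
        Real.rpow_le_rpow hb0.le h5 hy0
      have h7 : Real.exp (-x) ^ (keep (n+1) * α (n+1) / 2) =
          Real.exp (-x * (keep (n+1) * α (n+1) / 2)) := by rw [Real.exp_mul]
      have h8 : -x * (keep (n+1) * α (n+1) / 2) = -(keep (n+1) / (4*L)) := by
        rw [hx]; field_simp; ring
      have h9 : Real.exp (-(keep (n+1) / (4*L))) ≤ Real.exp (-(3/(16*L))) := by
        apply Real.exp_le_exp.mpr
        rw [neg_le_neg_iff, div_le_div_iff₀ (by positivity) (by positivity)]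
        nlinarith
      have h10 : Real.exp (-(3/(16*L))) ≤ 1 - 1/(6*L) := by
        have h := Real.add_one_le_exp (3/(16*L))
        rw [Real.exp_neg, ← one_div, div_le_iff₀ (Real.exp_pos _)]
        have harith : (1 - 1/(6*L)) * (3/(16*L) + 1) = 1 + 1/(48*L) - 1/(32*L^2) := by
          field_simp; ring
        have hsm : 1/(32*L^2) ≤ 1/(48*L) := by
          rw [div_le_div_iff₀ (by positivity) (by positivity)]
          nlinarith
        nlinarith [mul_le_mul_of_nonneg_left h (by
          have : 1/(6*L) ≤ 1/6000 := hε1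
          linarith : (0:ℝ) ≤ 1 - 1/(6*L))]
      calc color (n+1) = (1 - x) ^ (keep (n+1) * α (n+1) / 2) := hceq
        _ ≤ Real.exp (-x * (keep (n+1) * α (n+1) / 2)) := by rw [← h7]; exact h6
        _ = Real.exp (-(keep (n+1) / (4*L))) := by rw [h8]
        _ ≤ Real.exp (-(3/(16*L))) := h9
        _ ≤ 1 - 1/(6*L) := h10
    exact ⟨hklb, hcle, hαd⟩
  -- main induction
  have key : ∀ n : ℕ,
      β (n+1) / α (n+1) ≤ (1 - 1/(6*L))^n * (β 1 / α 1) ∧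
      α 1 * Real.exp (-(33/40)*L*(1 - (1 - 1/(6*L))^n)) ≤ α (n+1) := by
    intro n
    induction n with
    | zero =>
      constructor
      · norm_num
      · norm_num
    | succ n ih =>
      obtain ⟨h1, h2⟩ := ih
      obtain ⟨hklb, hcle, hαd⟩ := derived n h1 h2
      have hi : 1 ≤ n + 1 := Nat.le_add_left 1 n
      have hαp : 0 < α (n+1) := hαpos _ hi
      have hβp : 0 < β (n+1) := hβpos _ hi
      set q := (1 - 1/(6*L))^n with hq
      have hq0 : 0 ≤ q := pow_nonneg (by linarith) n
      have hkpos : 0 < keep (n+1) := by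
        have := (Real.exp_pos (-(11/80)*q)).trans_le hklb
        exact this
      constructor
      · have heq : β (n+2) / α (n+2) = color (n+1) * (β (n+1) / α (n+1)) := by
          rw [hβs (n+1) hi, hαs (n+1) hi]
          field_simp
        rw [heq]
        have hrpos : 0 ≤ β (n+1) / α (n+1) := by positivity
        have := mul_le_mul hcle h1 hrpos (by linarith : (0:ℝ) ≤ 1 - 1/(6*L))
        calc color (n+1) * (β (n+1) / α (n+1))
            ≤ (1 - 1/(6*L)) * (q * (β 1 / α 1)) := this
          _ = (1 - 1/(6*L))^(n+1) * (β 1 / α 1) := by rw [pow_succ]; ring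
      · have hExp : -(33/40)*L*(1 - (1 - 1/(6*L))^(n+1)) =
            -(11/80)*q + -(33/40)*L*(1 - q) := by
          rw [pow_succ, ← hq]
          field_simp
          ring
        rw [hαs (n+1) hi, hExp, Real.exp_add, ← mul_assoc,
          mul_comm (α 1) (Real.exp (-(11/80)*q)), mul_assoc]
        exact mul_le_mul hklb h2 (by positivity) hkpos.le
  refine ⟨?_, ?_, ?_⟩
  · intro i hi
    obtain ⟨n, rfl⟩ : ∃ n, i = n + 1 := ⟨i - 1, by omega⟩
    obtain ⟨h1, h2⟩ := key n
    exact (derived n h1 h2).2.1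
  · intro i hi
    exact (key i).1
  · intro i hi
    obtain ⟨n, rfl⟩ : ∃ n, i = n + 1 := ⟨i - 1, by omega⟩
    obtain ⟨h1, h2⟩ := key n
    exact (derived n h1 h2).2.2
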